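/- Fix constants γ > 0, β > 0, α₂ > 0, real numbers ξ and u (playing the role of U'(q)) with ξ + γ < 0. Define ψ : ℝ → ℝ by ψ(p) = −2α₂·∫₀^{c(p − u/|ξ+γ|)} D(z) dz, where c = |ξ+γ|^{1/2} / (2γ/β)^{1/2} and D is Dawson's integral. Then ψ is twice differentiable and satisfies, for every p ∈ ℝ, the ordinary differential equation −(ξ+γ)·p·ψ'(p) − u·ψ'(p) + (γ/β)·ψ''(p) = −α₂·|ξ+γ|. -/

import Mathlib

open Filter

noncomputable section

/-- Dawson's integral `D(z) = exp(−z²)·∫₀^z exp(y²) dy`. -/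
def dawson (z : ℝ) : ℝ := Real.exp (-z ^ 2) * ∫ y in (0:ℝ)..z, Real.exp (y ^ 2)

/-- The explicit solution `ψ(p) = −2α₂·∫₀^{c(p − u/|ξ+γ|)} D(z) dz` with
`c = |ξ+γ|^{1/2}/(2γ/β)^{1/2}`. -/
def psiOU (γ β α₂ ξ u : ℝ) (p : ℝ) : ℝ :=
  -2 * α₂ * ∫ z in (0:ℝ)..(Real.sqrt |ξ + γ| / Real.sqrt (2 * γ / β) * (p - u / |ξ + γ|)),
    dawson z

lemma hasDerivAt_dawson (z : ℝ) : HasDerivAt dawson (1 - 2 * z * dawson z) z := by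
  have hc : Continuous fun y : ℝ => Real.exp (y ^ 2) :=
    Real.continuous_exp.comp (continuous_pow 2)
  have hF : HasDerivAt (fun t => ∫ y in (0:ℝ)..t, Real.exp (y ^ 2)) (Real.exp (z ^ 2)) z :=
    intervalIntegral.integral_hasDerivAt_right (hc.intervalIntegrable _ _)
      (hc.stronglyMeasurableAtFilter _ _) hc.continuousAt
  have h1 : HasDerivAt (fun t : ℝ => -t ^ 2) (-(2 * z)) z := by
    exact (hasDerivAt_pow 2 z).neg.congr_deriv (by simp)
  have hE : HasDerivAt (fun t : ℝ => Real.exp (-t ^ 2)) (Real.exp (-z ^ 2) * (-(2 * z))) z := by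
    exact (Real.hasDerivAt_exp (-z ^ 2)).comp z h1
  have hmul := hE.mul hF
  have key : 1 - 2 * z * dawson z
      = Real.exp (-z ^ 2) * (-(2 * z)) * (∫ y in (0:ℝ)..z, Real.exp (y ^ 2))
        + Real.exp (-z ^ 2) * Real.exp (z ^ 2) := by
    have h2 : Real.exp (-z ^ 2) * Real.exp (z ^ 2) = 1 := by
      rw [← Real.exp_add]; simp
    unfold dawson
    nlinarith [h2]
  rw [key]
  exact hmul

lemma continuous_dawson : Continuous dawson :=
  continuous_iff_continuousAt.2 fun z => (hasDerivAt_dawson z).differentiableAt.continuousAt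

/-- `ψ` is twice differentiable and solves
`−(ξ+γ)·p·ψ' − u·ψ' + (γ/β)·ψ'' = −α₂·|ξ+γ|` on `ℝ`. -/
theorem psiOU_solves_ODE (γ β α₂ ξ u : ℝ) (hγ : 0 < γ) (hβ : 0 < β) (hα₂ : 0 < α₂)
    (hξ : ξ + γ < 0) :
    (∀ p : ℝ, DifferentiableAt ℝ (psiOU γ β α₂ ξ u) p) ∧
    (∀ p : ℝ, DifferentiableAt ℝ (deriv (psiOU γ β α₂ ξ u)) p) ∧
    ∀ p : ℝ,
      -(ξ + γ) * p * deriv (psiOU γ β α₂ ξ u) p - u * deriv (psiOU γ β α₂ ξ u) p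
          + γ / β * deriv (deriv (psiOU γ β α₂ ξ u)) p
        = -α₂ * |ξ + γ| := by
  set k := |ξ + γ| with hkdef
  have hk0 : 0 < k := abs_pos.2 (ne_of_lt hξ)
  have hkneg : k = -(ξ + γ) := abs_of_neg hξ
  set c := Real.sqrt k / Real.sqrt (2 * γ / β) with hcdef
  have h2γβ : 0 < 2 * γ / β := by positivity
  have hc0 : 0 < c := div_pos (Real.sqrt_pos.2 hk0) (Real.sqrt_pos.2 h2γβ)
  have hc2 : c ^ 2 = k / (2 * γ / β) := by
    rw [hcdef, div_pow, Real.sq_sqrt hk0.le, Real.sq_sqrt h2γβ.le]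
  have hgb : γ / β * c ^ 2 * 2 = k := by
    rw [hc2]; field_simp
  -- FTC for the outer integral
  have hG : ∀ x : ℝ, HasDerivAt (fun t => ∫ z in (0:ℝ)..t, dawson z) (dawson x) x := fun x =>
    intervalIntegral.integral_hasDerivAt_right (continuous_dawson.intervalIntegrable _ _)
      (continuous_dawson.stronglyMeasurableAtFilter _ _) continuous_dawson.continuousAt
  have hψeq : psiOU γ β α₂ ξ u = fun p => -2 * α₂ * ∫ z in (0:ℝ)..(c * (p - u / k)), dawson z :=
    rfl
  have hψ : ∀ p : ℝ, HasDerivAt (psiOU γ β α₂ ξ u)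
      (-2 * α₂ * (dawson (c * (p - u / k)) * c)) p := by
    intro p
    rw [hψeq]
    have hL : HasDerivAt (fun p : ℝ => c * (p - u / k)) c p := by
      simpa using ((hasDerivAt_id p).sub_const (u / k)).const_mul c
    exact ((hG (c * (p - u / k))).comp p hL).const_mul (-2 * α₂)
  have hd1 : deriv (psiOU γ β α₂ ξ u)
      = fun p => -2 * α₂ * (dawson (c * (p - u / k)) * c) :=
    funext fun p => (hψ p).deriv
  have hψ' : ∀ p : ℝ, HasDerivAt (deriv (psiOU γ β α₂ ξ u))
      (-2 * α₂ * ((1 - 2 * (c * (p - u / k)) * dawson (c * (p - u / k))) * c * c)) p := by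
    intro p
    rw [hd1]
    have hL : HasDerivAt (fun p : ℝ => c * (p - u / k)) c p := by
      simpa using ((hasDerivAt_id p).sub_const (u / k)).const_mul c
    exact (((hasDerivAt_dawson (c * (p - u / k))).comp p hL).mul_const c).const_mul (-2 * α₂)
  refine ⟨fun p => (hψ p).differentiableAt, fun p => (hψ' p).differentiableAt, fun p => ?_⟩
  have e1 : deriv (psiOU γ β α₂ ξ u) p = -2 * α₂ * (dawson (c * (p - u / k)) * c) := (hψ p).deriv
  have e2 : deriv (deriv (psiOU γ β α₂ ξ u)) p
      = -2 * α₂ * ((1 - 2 * (c * (p - u / k)) * dawson (c * (p - u / k))) * c * c) :=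
    (hψ' p).deriv
  rw [e1, e2, ← hkneg]
  set D := dawson (c * (p - u / k)) with hD
  generalize hg : γ / β = g at hgb ⊢
  clear_value D
  clear_value c
  clear_value k
  have hk' : k * k⁻¹ = 1 := mul_inv_cancel₀ hk0.ne'
  linear_combination (-α₂ * (1 - 2 * c * p * D + 2 * c * u * D / k)) * hgb + (-2 * α₂ * c * u * D) * hk'
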